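/- Let H : ℝ^d × ℝ → ℝ be C² with everywhere positive definite Hessian and superlinear, and let A : ℝ^d → ℝ be C² with everywhere positive definite Hessian and satisfy A(p') ≥ min_p H(p',p) for all p'. Let π^0(p') be the unique minimizer of p ↦ H(p',p), and for λ ≥ H(p',π^0(p')) let π^+(p',λ) (resp. π^-(p',λ)) be the unique p ≥ π^0(p') (resp. p ≤ π^0(p')) with H(p',p) = λ. For Z = (z', z) ∈ ℝ^d × ℝ, set 𝔊(Z) = sup { p'·z' + p z − λ : H(p',p) = λ ≥ A(p') }. Suppose (p',p,λ) and (q',q,μ) both lie in the constraint set, realize 𝔊(Z), and admit multipliers α, β ∈ [0,1] with z = α ∂_p H(p',p), z' = α ∇_{p'}H(p',p) + (1−α) ∇A(p'), and the analogous equations for (β, q', q). Then λ = μ, p' = q'; if z > 0 then p = q = π^+(p',λ); if z < 0 then p = q = π^-(p',λ); and moreover, setting p̂ = π^+(p',λ) when z ≥ 0 and p̂ = π^-(p',λ) when z ≤ 0, one has 𝔊(Z) = p'·z' + p̂ z − λ together with z = α ∂_p H(p',p̂) and z' = α ∇_{p'}H(p',p̂) + (1−α) ∇A(p'). -/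

import Mathlib

open scoped RealInnerProductSpace

lemma lineHasDerivAt {E : Type*} [NormedAddCommGroup E] [NormedSpace ℝ E]
    (f : E → ℝ) (hf : ContDiff ℝ 2 f) (x v : E) (t : ℝ) :
    HasDerivAt (fun s : ℝ => f (x + s • v)) (fderiv ℝ f (x + t • v) v) t := by
  have hc : HasDerivAt (fun s : ℝ => x + s • v) v t := by
    simpa using ((hasDerivAt_id t).smul_const v).const_add x
  have hd : HasFDerivAt f (fderiv ℝ f (x + t • v)) (x + t • v) :=
    (hf.differentiable two_ne_zero (x + t • v)).hasFDerivAt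
  exact hd.comp_hasDerivAt t hc

lemma lineHasDerivAt2 {E : Type*} [NormedAddCommGroup E] [NormedSpace ℝ E]
    (f : E → ℝ) (hf : ContDiff ℝ 2 f) (x v : E) (t : ℝ) :
    HasDerivAt (fun s : ℝ => fderiv ℝ f (x + s • v) v)
      (iteratedFDeriv ℝ 2 f (x + t • v) ![v, v]) t := by
  have hc : HasDerivAt (fun s : ℝ => x + s • v) v t := by
    simpa using ((hasDerivAt_id t).smul_const v).const_add x
  have hd1 : ContDiff ℝ 1 (fderiv ℝ f) := hf.fderiv_right (le_refl _)
  have hd : HasFDerivAt (fderiv ℝ f) (fderiv ℝ (fderiv ℝ f) (x + t • v)) (x + t • v) :=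
    (hd1.differentiable one_ne_zero (x + t • v)).hasFDerivAt
  have h1 : HasDerivAt (fun s : ℝ => fderiv ℝ f (x + s • v))
      (fderiv ℝ (fderiv ℝ f) (x + t • v) v) t := hd.comp_hasDerivAt t hc
  have h2 := (ContinuousLinearMap.apply ℝ ℝ v).hasFDerivAt.comp_hasDerivAt t h1
  rw [iteratedFDeriv_two_apply]
  exact h2

lemma strict_line (g g' g'' : ℝ → ℝ)
    (hg : ∀ t, HasDerivAt g (g' t) t)
    (hg' : ∀ t, HasDerivAt g' (g'' t) t)
    (hpos : ∀ t, 0 < g'' t) (h0 : g' 0 = 0) : g 0 < g 1 := by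
  have hm : StrictMono g' :=
    strictMono_of_deriv_pos (fun t => by rw [(hg' t).deriv]; exact hpos t)
  have hmono : StrictMonoOn g (Set.Ici 0) := by
    apply strictMonoOn_of_deriv_pos (convex_Ici 0)
      (fun t _ => (hg t).continuousAt.continuousWithinAt)
    intro t ht
    rw [interior_Ici] at ht
    rw [(hg t).deriv]
    calc (0:ℝ) = g' 0 := h0.symm
    _ < g' t := hm ht
  exact hmono Set.self_mem_Ici (by norm_num) zero_lt_one

lemma gradBridge {n : ℕ} (f : EuclideanSpace ℝ (Fin n) → ℝ) (x v : EuclideanSpace ℝ (Fin n)) :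
    ⟪gradient f x, v⟫ = fderiv ℝ f x v := by
  rw [gradient]
  exact InnerProductSpace.toDual_symm_apply

set_option maxHeartbeats 2000000 in
/-- Uniqueness of the maximiser, ii-version: with `π0 p'` the unique
minimizer of `p ↦ H (p', p)` and `π^± p' λ` the unique solutions of `H (p', ·) = λ` above
and below `π0 p'`, if two feasible points `(p', p, λ)` and `(q', q, μ)` both realize the
supremum `𝔊 (z', z)` and admit multipliers `α, β ∈ [0,1]`, then `λ = μ`, `p' = q'`,
`p = q = π^+ p' λ` if `z > 0`, `p = q = π^- p' λ` if `z < 0`, and setting `p̂ = π^+ p' λ`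
when `z ≥ 0` (resp. `p̂ = π^- p' λ` when `z ≤ 0`) the supremum is also realized at
`(p', p̂, λ)` with the same multiplier `α`. -/
theorem vertex_maximiser_unique_ii (d : ℕ)
    (H : EuclideanSpace ℝ (Fin d) × ℝ → ℝ)
    (hC2 : ContDiff ℝ 2 H)
    (hpos : ∀ P v : EuclideanSpace ℝ (Fin d) × ℝ, v ≠ 0 →
      0 < iteratedFDeriv ℝ 2 H P ![v, v])
    (hsup : ∀ M : ℝ, ∃ R : ℝ, ∀ P : EuclideanSpace ℝ (Fin d) × ℝ, R ≤ ‖P‖ → M * ‖P‖ ≤ H P)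
    (A : EuclideanSpace ℝ (Fin d) → ℝ)
    (hAC2 : ContDiff ℝ 2 A)
    (hApos : ∀ p' v : EuclideanSpace ℝ (Fin d), v ≠ 0 →
      0 < iteratedFDeriv ℝ 2 A p' ![v, v])
    (hAbound : ∀ p' : EuclideanSpace ℝ (Fin d), (⨅ p : ℝ, H (p', p)) ≤ A p')
    (π0 : EuclideanSpace ℝ (Fin d) → ℝ)
    (hπ0 : ∀ p', (∀ q : ℝ, H (p', π0 p') ≤ H (p', q)) ∧
      ∀ p : ℝ, (∀ q : ℝ, H (p', p) ≤ H (p', q)) → p = π0 p')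
    (πp πm : EuclideanSpace ℝ (Fin d) → ℝ → ℝ)
    (hπp : ∀ (p' : EuclideanSpace ℝ (Fin d)) (lam : ℝ), H (p', π0 p') ≤ lam →
      π0 p' ≤ πp p' lam ∧ H (p', πp p' lam) = lam ∧
      ∀ p : ℝ, π0 p' ≤ p → H (p', p) = lam → p = πp p' lam)
    (hπm : ∀ (p' : EuclideanSpace ℝ (Fin d)) (lam : ℝ), H (p', π0 p') ≤ lam →
      πm p' lam ≤ π0 p' ∧ H (p', πm p' lam) = lam ∧
      ∀ p : ℝ, p ≤ π0 p' → H (p', p) = lam → p = πm p' lam)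
    (z' : EuclideanSpace ℝ (Fin d)) (z : ℝ)
    (p' q' : EuclideanSpace ℝ (Fin d)) (p q lam mu : ℝ)
    (hfeasP : H (p', p) = lam ∧ A p' ≤ lam)
    (hfeasQ : H (q', q) = mu ∧ A q' ≤ mu)
    (hvals : ⟪p', z'⟫ + p * z - lam = ⟪q', z'⟫ + q * z - mu)
    (hmax : IsGreatest {v : ℝ | ∃ (r' : EuclideanSpace ℝ (Fin d)) (r nu : ℝ),
        H (r', r) = nu ∧ A r' ≤ nu ∧ v = ⟪r', z'⟫ + r * z - nu}
      (⟪p', z'⟫ + p * z - lam))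
    (a : ℝ) (ha0 : 0 ≤ a) (ha1 : a ≤ 1)
    (heqPz : z = a * deriv (fun r : ℝ => H (p', r)) p)
    (heqPz' : z' = a • gradient (fun r : EuclideanSpace ℝ (Fin d) => H (r, p)) p'
        + (1 - a) • gradient A p')
    (b : ℝ) (hb0 : 0 ≤ b) (hb1 : b ≤ 1)
    (heqQz : z = b * deriv (fun r : ℝ => H (q', r)) q)
    (heqQz' : z' = b • gradient (fun r : EuclideanSpace ℝ (Fin d) => H (r, q)) q'
        + (1 - b) • gradient A q') :
    lam = mu ∧ p' = q' ∧
    (0 < z → p = q ∧ p = πp p' lam) ∧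
    (z < 0 → p = q ∧ p = πm p' lam) ∧
    (0 ≤ z →
      (⟪p', z'⟫ + p * z - lam = ⟪p', z'⟫ + πp p' lam * z - lam) ∧
      z = a * deriv (fun r : ℝ => H (p', r)) (πp p' lam) ∧
      z' = a • gradient (fun r : EuclideanSpace ℝ (Fin d) => H (r, πp p' lam)) p'
        + (1 - a) • gradient A p') ∧
    (z ≤ 0 →
      (⟪p', z'⟫ + p * z - lam = ⟪p', z'⟫ + πm p' lam * z - lam) ∧
      z = a * deriv (fun r : ℝ => H (p', r)) (πm p' lam) ∧
      z' = a • gradient (fun r : EuclideanSpace ℝ (Fin d) => H (r, πm p' lam)) p'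
        + (1 - a) • gradient A p') := by
  obtain ⟨hHP, hAP⟩ := hfeasP
  obtain ⟨hHQ, hAQ⟩ := hfeasQ
  have he0 : (((0 : EuclideanSpace ℝ (Fin d)), (1 : ℝ)) : EuclideanSpace ℝ (Fin d) × ℝ) ≠ 0 := by
    simp [Prod.ext_iff]
  have lineEq : ∀ s : ℝ, ((p', (0:ℝ)) : EuclideanSpace ℝ (Fin d) × ℝ) + s • (((0 : EuclideanSpace ℝ (Fin d)), (1 : ℝ)) : EuclideanSpace ℝ (Fin d) × ℝ) = (p', s) := by
    intro s; simp [Prod.ext_iff]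
  have hs : ∀ r : ℝ, HasDerivAt (fun r : ℝ => H (p', r))
      (fderiv ℝ H (p', r) (((0 : EuclideanSpace ℝ (Fin d)), (1 : ℝ)) : EuclideanSpace ℝ (Fin d) × ℝ)) r := by
    intro r
    have h := lineHasDerivAt H hC2 (p', (0:ℝ)) (((0 : EuclideanSpace ℝ (Fin d)), (1 : ℝ)) : EuclideanSpace ℝ (Fin d) × ℝ) r
    simp only [lineEq] at h
    exact h
  set sD : ℝ → ℝ := fun r => fderiv ℝ H (p', r) (((0 : EuclideanSpace ℝ (Fin d)), (1 : ℝ)) : EuclideanSpace ℝ (Fin d) × ℝ) with hsDdef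
  have hs2 : ∀ r : ℝ, HasDerivAt sD
      (iteratedFDeriv ℝ 2 H (p', r) ![(((0 : EuclideanSpace ℝ (Fin d)), (1 : ℝ)) : EuclideanSpace ℝ (Fin d) × ℝ), ((0 : EuclideanSpace ℝ (Fin d)), (1 : ℝ))]) r := by
    intro r
    have h := lineHasDerivAt2 H hC2 (p', (0:ℝ)) (((0 : EuclideanSpace ℝ (Fin d)), (1 : ℝ)) : EuclideanSpace ℝ (Fin d) × ℝ) r
    simp only [lineEq] at h
    exact h
  have sMono : StrictMono sD :=
    strictMono_of_deriv_pos (fun r => by rw [(hs2 r).deriv]; exact hpos _ _ he0)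
  have hzs : z = a * sD p := by rw [heqPz, (hs p).deriv]
  have hmincrit : sD (π0 p') = 0 := by
    have hloc : IsLocalMin (fun r : ℝ => H (p', r)) (π0 p') :=
      Filter.Eventually.of_forall (fun r => (hπ0 p').1 r)
    have h := hloc.deriv_eq_zero
    rwa [(hs (π0 p')).deriv] at h
  have hminle : H (p', π0 p') ≤ lam := by rw [← hHP]; exact (hπ0 p').1 p
  -- complementarity
  have hcompl : a = 1 ∨ A p' = lam := by
    by_contra hcon
    push_neg at hcon
    obtain ⟨ha, hA⟩ := hcon
    have hAlt : A p' < lam := lt_of_le_of_ne hAP hA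
    have hEv : ∀ᶠ r in nhds p, A p' < H (p', r) := by
      have hcont : ContinuousAt (fun r : ℝ => H (p', r)) p := (hs p).continuousAt
      have hmem : Set.Ioi (A p') ∈ nhds (H (p', p)) := Ioi_mem_nhds (by rw [hHP]; exact hAlt)
      exact hcont.preimage_mem_nhds hmem
    have hloc : IsLocalMax (fun r : ℝ => ⟪p', z'⟫ + r * z - H (p', r)) p := by
      filter_upwards [hEv] with r hr
      have hmem : (⟪p', z'⟫ + r * z - H (p', r)) ∈ {v : ℝ | ∃ (r' : EuclideanSpace ℝ (Fin d)) (rr nu : ℝ),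
          H (r', rr) = nu ∧ A r' ≤ nu ∧ v = ⟪r', z'⟫ + rr * z - nu} :=
        ⟨p', r, H (p', r), rfl, le_of_lt hr, rfl⟩
      have h := hmax.2 hmem
      simpa [hHP] using h
    have hD : HasDerivAt (fun r : ℝ => ⟪p', z'⟫ + r * z - H (p', r)) (z - sD p) p := by
      have h1 : HasDerivAt (fun r : ℝ => ⟪p', z'⟫ + r * z) z p := by
        simpa using ((hasDerivAt_id p).mul_const z).const_add (⟪p', z'⟫)
      exact h1.sub (hs p)
    have hd0 := hloc.deriv_eq_zero
    rw [hD.deriv] at hd0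
    have hsDp : sD p = 0 := by
      have h1 : (1 - a) * sD p = 0 := by nlinarith [hzs]
      rcases mul_eq_zero.mp h1 with h | h
      · exact absurd (by linarith : a = 1) ha
      · exact h
    have hp0 : p = π0 p' := sMono.injective (by rw [hsDp, hmincrit])
    have h2 : H (p', π0 p') ≤ A p' :=
      le_trans (le_ciInf fun r => (hπ0 p').1 r) (hAbound p')
    rw [← hp0, hHP] at h2
    exact absurd h2 (not_le.mpr hAlt)
  -- partial fderiv in the first variable
  have hfst : HasFDerivAt (fun r' : EuclideanSpace ℝ (Fin d) => H (r', p))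
      ((fderiv ℝ H (p', p)).comp (ContinuousLinearMap.inl ℝ (EuclideanSpace ℝ (Fin d)) ℝ)) p' := by
    have h1 : HasFDerivAt (fun r' : EuclideanSpace ℝ (Fin d) => ((r', p) : EuclideanSpace ℝ (Fin d) × ℝ))
        (ContinuousLinearMap.inl ℝ (EuclideanSpace ℝ (Fin d)) ℝ) p' := by
      have h2 := (ContinuousLinearMap.inl ℝ (EuclideanSpace ℝ (Fin d)) ℝ).hasFDerivAt (x := p')
      have h3 := h2.add_const ((0 : EuclideanSpace ℝ (Fin d)), p)
      have heq : (fun r' : EuclideanSpace ℝ (Fin d) => (ContinuousLinearMap.inl ℝ (EuclideanSpace ℝ (Fin d)) ℝ) r' + ((0 : EuclideanSpace ℝ (Fin d)), p))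
          = fun r' : EuclideanSpace ℝ (Fin d) => ((r', p) : EuclideanSpace ℝ (Fin d) × ℝ) := by
        funext r'; simp [Prod.ext_iff]
      rwa [heq] at h3
    exact (hC2.differentiable two_ne_zero (p', p)).hasFDerivAt.comp p' h1
  have hgradH : ∀ v' : EuclideanSpace ℝ (Fin d), ⟪gradient (fun r' : EuclideanSpace ℝ (Fin d) => H (r', p)) p', v'⟫
      = fderiv ℝ H (p', p) ((v', 0) : EuclideanSpace ℝ (Fin d) × ℝ) := by
    intro v'
    rw [gradBridge, hfst.fderiv]
    rfl
  have hgradA : ∀ (x v' : EuclideanSpace ℝ (Fin d)), ⟪gradient A x, v'⟫ = fderiv ℝ A x v' :=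
    fun x v' => gradBridge A x v'
  have split : ∀ (v' : EuclideanSpace ℝ (Fin d)) (vt : ℝ), fderiv ℝ H (p', p) ((v', vt) : EuclideanSpace ℝ (Fin d) × ℝ)
      = fderiv ℝ H (p', p) ((v', 0) : EuclideanSpace ℝ (Fin d) × ℝ) + vt * sD p := by
    intro v' vt
    have hveq : ((v', vt) : EuclideanSpace ℝ (Fin d) × ℝ) = (v', 0) + vt • (((0 : EuclideanSpace ℝ (Fin d)), (1 : ℝ)) : EuclideanSpace ℝ (Fin d) × ℝ) := by
      simp [Prod.ext_iff]
    rw [hveq, map_add, map_smul, smul_eq_mul, hsDdef]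
    -- key uniqueness step
  have key : lam = mu ∧ p' = q' ∧ (a ≠ 0 → p = q) := by
    rcases eq_or_ne a 0 with ha | ha
    · -- a = 0 : then z = 0 and z' = gradient A p'
      have hz0 : z = 0 := by rw [hzs, ha, zero_mul]
      have hz'A : z' = gradient A p' := by rw [heqPz', ha]; simp
      have hApl : A p' = lam := by
        rcases hcompl with h | h
        · rw [ha] at h; norm_num at h
        · exact h
      have hq'p' : q' = p' := by
        by_contra hne
        have hv : q' - p' ≠ 0 := sub_ne_zero.mpr hne
        have hg : ∀ t : ℝ, HasDerivAt
            (fun t : ℝ => A (p' + t • (q' - p')) - (⟪z', p'⟫ + t * ⟪z', q' - p'⟫))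
            (fderiv ℝ A (p' + t • (q' - p')) (q' - p') - ⟪z', q' - p'⟫) t := by
          intro t
          have h1 := lineHasDerivAt A hAC2 p' (q' - p') t
          have h2 : HasDerivAt (fun t : ℝ => ⟪z', p'⟫ + t * ⟪z', q' - p'⟫) (⟪z', q' - p'⟫) t := by
            simpa using ((hasDerivAt_id t).mul_const (⟪z', q' - p'⟫)).const_add (⟪z', p'⟫)
          exact h1.sub h2
        have hg' : ∀ t : ℝ, HasDerivAt
            (fun t : ℝ => fderiv ℝ A (p' + t • (q' - p')) (q' - p') - ⟪z', q' - p'⟫)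
            (iteratedFDeriv ℝ 2 A (p' + t • (q' - p')) ![q' - p', q' - p']) t :=
          fun t => (lineHasDerivAt2 A hAC2 p' (q' - p') t).sub_const _
        have h0 : fderiv ℝ A (p' + (0:ℝ) • (q' - p')) (q' - p') - ⟪z', q' - p'⟫ = 0 := by
          have h1 : ⟪z', q' - p'⟫ = fderiv ℝ A p' (q' - p') := by
            rw [hz'A]; exact hgradA p' (q' - p')
          simp [h1]
        have hlt := strict_line _ _ _ hg hg' (fun t => hApos _ _ hv) h0
        simp only [zero_smul, add_zero, zero_mul, one_smul, one_mul] at hlt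
        have eq1 : p' + (q' - p') = q' := by abel
        rw [eq1] at hlt
        have f1 : ⟪z', q' - p'⟫ = ⟪z', q'⟫ - ⟪z', p'⟫ := inner_sub_right z' q' p'
        have c1 : ⟪z', p'⟫ = ⟪p', z'⟫ := real_inner_comm p' z'
        have c2 : ⟪z', q'⟫ = ⟪q', z'⟫ := real_inner_comm q' z'
        have hpz : p * z = 0 := by rw [hz0, mul_zero]
        have hqz : q * z = 0 := by rw [hz0, mul_zero]
        linarith [hlt, hvals, hAQ]
      have hlm : lam = mu := by
        rw [hq'p'] at hvals
        have hpz : p * z = 0 := by rw [hz0, mul_zero]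
        have hqz : q * z = 0 := by rw [hz0, mul_zero]
        linarith [hvals]
      exact ⟨hlm, hq'p'.symm, fun h => absurd ha h⟩
    · -- a ≠ 0
      have hapos : 0 < a := lt_of_le_of_ne ha0 (Ne.symm ha)
      have hPQ : q' = p' ∧ q = p := by
        by_contra hne
        have hV : ((q' - p', q - p) : (EuclideanSpace ℝ (Fin d)) × ℝ) ≠ 0 := by
          intro h
          simp only [Prod.ext_iff, Prod.fst_zero, Prod.snd_zero, sub_eq_zero] at h
          exact hne h
        have hlin1 : ∀ t : ℝ, HasDerivAt (fun t : ℝ => ⟪z', p'⟫ + t * ⟪z', q' - p'⟫)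
            (⟪z', q' - p'⟫) t := fun t => by
          simpa using ((hasDerivAt_id t).mul_const (⟪z', q' - p'⟫)).const_add (⟪z', p'⟫)
        have hlin2 : ∀ t : ℝ, HasDerivAt (fun t : ℝ => z * p + t * (z * (q - p)))
            (z * (q - p)) t := fun t => by
          simpa using ((hasDerivAt_id t).mul_const (z * (q - p))).const_add (z * p)
        have hg : ∀ t : ℝ, HasDerivAt
            (fun t : ℝ => a * H ((p', p) + t • ((q' - p', q - p) : (EuclideanSpace ℝ (Fin d)) × ℝ))
              + (1 - a) * A (p' + t • (q' - p'))
              - (⟪z', p'⟫ + t * ⟪z', q' - p'⟫) - (z * p + t * (z * (q - p))))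
            (a * fderiv ℝ H ((p', p) + t • ((q' - p', q - p) : (EuclideanSpace ℝ (Fin d)) × ℝ)) ((q' - p', q - p) : (EuclideanSpace ℝ (Fin d)) × ℝ)
              + (1 - a) * fderiv ℝ A (p' + t • (q' - p')) (q' - p')
              - ⟪z', q' - p'⟫ - (z * (q - p))) t := by
          intro t
          exact ((((lineHasDerivAt H hC2 (p', p) _ t).const_mul a).add
            ((lineHasDerivAt A hAC2 p' (q' - p') t).const_mul (1 - a))).sub (hlin1 t)).sub (hlin2 t)
        have hg' : ∀ t : ℝ, HasDerivAt
            (fun t : ℝ => a * fderiv ℝ H ((p', p) + t • ((q' - p', q - p) : (EuclideanSpace ℝ (Fin d)) × ℝ)) ((q' - p', q - p) : (EuclideanSpace ℝ (Fin d)) × ℝ)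
              + (1 - a) * fderiv ℝ A (p' + t • (q' - p')) (q' - p')
              - ⟪z', q' - p'⟫ - (z * (q - p)))
            (a * iteratedFDeriv ℝ 2 H ((p', p) + t • ((q' - p', q - p) : (EuclideanSpace ℝ (Fin d)) × ℝ))
                ![((q' - p', q - p) : (EuclideanSpace ℝ (Fin d)) × ℝ), ((q' - p', q - p) : (EuclideanSpace ℝ (Fin d)) × ℝ)]
              + (1 - a) * iteratedFDeriv ℝ 2 A (p' + t • (q' - p')) ![q' - p', q' - p']) t := by
          intro t
          exact ((((lineHasDerivAt2 H hC2 (p', p) _ t).const_mul a).add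
            ((lineHasDerivAt2 A hAC2 p' (q' - p') t).const_mul (1 - a))).sub_const _).sub_const _
        have hpos'' : ∀ t : ℝ,
            0 < a * iteratedFDeriv ℝ 2 H ((p', p) + t • ((q' - p', q - p) : (EuclideanSpace ℝ (Fin d)) × ℝ))
                ![((q' - p', q - p) : (EuclideanSpace ℝ (Fin d)) × ℝ), ((q' - p', q - p) : (EuclideanSpace ℝ (Fin d)) × ℝ)]
              + (1 - a) * iteratedFDeriv ℝ 2 A (p' + t • (q' - p')) ![q' - p', q' - p'] := by
          intro t
          have h1 : 0 < a * iteratedFDeriv ℝ 2 H ((p', p) + t • ((q' - p', q - p) : (EuclideanSpace ℝ (Fin d)) × ℝ))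
              ![((q' - p', q - p) : (EuclideanSpace ℝ (Fin d)) × ℝ), ((q' - p', q - p) : (EuclideanSpace ℝ (Fin d)) × ℝ)] :=
            mul_pos hapos (hpos _ _ hV)
          have h2 : 0 ≤ (1 - a) * iteratedFDeriv ℝ 2 A (p' + t • (q' - p')) ![q' - p', q' - p'] := by
            rcases eq_or_ne (q' - p') 0 with hv0 | hv0
            · rw [hv0]
              have hz2 : iteratedFDeriv ℝ 2 A (p' + t • (0 : (EuclideanSpace ℝ (Fin d)))) ![(0 : (EuclideanSpace ℝ (Fin d))), 0] = 0 :=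
                ContinuousMultilinearMap.map_coord_zero _ (0 : Fin 2) rfl
              rw [hz2, mul_zero]
            · exact mul_nonneg (by linarith) (le_of_lt (hApos _ _ hv0))
          linarith
        have h0 : a * fderiv ℝ H ((p', p) + (0:ℝ) • ((q' - p', q - p) : (EuclideanSpace ℝ (Fin d)) × ℝ)) ((q' - p', q - p) : (EuclideanSpace ℝ (Fin d)) × ℝ)
            + (1 - a) * fderiv ℝ A (p' + (0:ℝ) • (q' - p')) (q' - p')
            - ⟪z', q' - p'⟫ - (z * (q - p)) = 0 := by
          have e1 : ((p', p) : (EuclideanSpace ℝ (Fin d)) × ℝ) + (0:ℝ) • ((q' - p', q - p) : (EuclideanSpace ℝ (Fin d)) × ℝ) = (p', p) := by simp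
          have e2 : p' + (0:ℝ) • (q' - p') = p' := by simp
          rw [e1, e2, split (q' - p') (q - p), ← hgradH (q' - p')]
          have hinner : ⟪z', q' - p'⟫
              = a * ⟪gradient (fun r' : (EuclideanSpace ℝ (Fin d)) => H (r', p)) p', q' - p'⟫
                + (1 - a) * ⟪gradient A p', q' - p'⟫ := by
            rw [heqPz', inner_add_left, real_inner_smul_left, real_inner_smul_left]
          rw [hinner, hgradA p' (q' - p'), hzs]
          ring
        have hlt := strict_line _ _ _ hg hg' hpos'' h0
        simp only [zero_smul, add_zero, zero_mul, one_smul, one_mul] at hlt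
        have eq1 : p' + (q' - p') = q' := by abel
        have eqP : ((p', p) : (EuclideanSpace ℝ (Fin d)) × ℝ) + ((q' - p', q - p) : (EuclideanSpace ℝ (Fin d)) × ℝ) = (q', q) := by
          simp only [Prod.mk_add_mk, Prod.mk.injEq]
          constructor <;> abel
        rw [eq1, eqP] at hlt
        have hg0val : a * H (p', p) + (1 - a) * A p' = lam := by
          rcases hcompl with h | h <;> rw [hHP, h] <;> ring
        have hg1le : a * H (q', q) + (1 - a) * A q' ≤ mu := by
          rw [hHQ]; nlinarith [hAQ]
        have f1 : ⟪z', q' - p'⟫ = ⟪z', q'⟫ - ⟪z', p'⟫ := inner_sub_right z' q' p'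
        have c1 : ⟪z', p'⟫ = ⟪p', z'⟫ := real_inner_comm p' z'
        have c2 : ⟪z', q'⟫ = ⟪q', z'⟫ := real_inner_comm q' z'
        nlinarith [hlt, hvals, hg0val, hg1le]
      have hlm : lam = mu := by rw [← hHP, ← hHQ, hPQ.1, hPQ.2]
      exact ⟨hlm, hPQ.1.symm, fun _ => hPQ.2.symm⟩
  obtain ⟨hlm, hp'q', hpq⟩ := key
  have hane : z ≠ 0 → a ≠ 0 := by
    intro hz ha
    rw [ha, zero_mul] at hzs
    exact hz hzs
  have hzpos_pip : 0 < z → p = πp p' lam := by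
    intro hz
    have hsDpos : 0 < sD p := by
      by_contra hle
      push_neg at hle
      nlinarith [hzs]
    have hlt : π0 p' < p := sMono.lt_iff_lt.mp (by rw [hmincrit]; exact hsDpos)
    exact (hπp p' lam hminle).2.2 p (le_of_lt hlt) hHP
  have hzneg_pim : z < 0 → p = πm p' lam := by
    intro hz
    have hsDneg : sD p < 0 := by
      by_contra hle
      push_neg at hle
      nlinarith [hzs]
    have hlt : p < π0 p' := sMono.lt_iff_lt.mp (by rw [hmincrit]; exact hsDneg)
    exact (hπm p' lam hminle).2.2 p (le_of_lt hlt) hHP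
  have hz0case : z = 0 → a ≠ 0 → (πp p' lam = p ∧ πm p' lam = p) := by
    intro hz ha
    have hsD0 : sD p = 0 := by
      have h1 : a * sD p = 0 := by rw [← hzs, hz]
      exact (mul_eq_zero.mp h1).resolve_left ha
    have hp0 : p = π0 p' := sMono.injective (by rw [hsD0, hmincrit])
    constructor
    · exact ((hπp p' lam hminle).2.2 p (le_of_eq hp0.symm) hHP).symm
    · exact ((hπm p' lam hminle).2.2 p (le_of_eq hp0) hHP).symm
  refine ⟨hlm, hp'q', ?_, ?_, ?_, ?_⟩
  · intro hz
    exact ⟨hpq (hane (ne_of_gt hz)), hzpos_pip hz⟩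
  · intro hz
    exact ⟨hpq (hane (ne_of_lt hz)), hzneg_pim hz⟩
  · intro hz
    rcases eq_or_lt_of_le hz with hz0 | hzpos
    · rcases eq_or_ne a 0 with ha | ha
      · refine ⟨by rw [← hz0]; ring, by rw [← hz0, ha, zero_mul], ?_⟩
        rw [ha] at heqPz' ⊢
        simpa using heqPz'
      · obtain ⟨hππ, _⟩ := hz0case hz0.symm ha
        exact ⟨by rw [hππ], by rw [hππ]; exact heqPz, by rw [hππ]; exact heqPz'⟩
    · have hp := hzpos_pip hzpos
      exact ⟨by rw [← hp], by rw [← hp]; exact heqPz, by rw [← hp]; exact heqPz'⟩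
  · intro hz
    rcases eq_or_lt_of_le hz with hz0 | hzneg
    · rcases eq_or_ne a 0 with ha | ha
      · refine ⟨by rw [hz0]; ring, by rw [hz0, ha, zero_mul], ?_⟩
        rw [ha] at heqPz' ⊢
        simpa using heqPz'
      · obtain ⟨_, hππ⟩ := hz0case hz0 ha
        exact ⟨by rw [hππ], by rw [hππ]; exact heqPz, by rw [hππ]; exact heqPz'⟩
    · have hp := hzneg_pim hzneg
      exact ⟨by rw [← hp], by rw [← hp]; exact heqPz, by rw [← hp]; exact heqPz'⟩
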